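/- Let α : ℤ → ℝ², written α(u) = (α¹(u), α²(u)), satisfy α¹(u+1) > α¹(u) for all u ∈ ℤ, and let β(v) = (0, v) for v ∈ ℤ. Let q(u,v) = (x(u,v), z(u,v)) be a centre-chord net of (α,β), with x(u,v) = (x¹(u,v), x²(u,v)). Then there exists a function φ : ℝ → ℝ such that z(u,v) = x¹(u,v)·x²(u,v) + φ(x¹(u,v)) for all (u,v) ∈ ℤ². -/

import Mathlib

noncomputable section

abbrev R3 : Type := ℝ × ℝ × ℝ
abbrev R2 : Type := ℝ × ℝ

/-- Determinant of the 3×3 matrix with columns `a`, `b`, `c`. -/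
def det3 (a b c : R3) : ℝ :=
  a.1 * (b.2.1 * c.2.2 - b.2.2 * c.2.1)
    - b.1 * (a.2.1 * c.2.2 - a.2.2 * c.2.1)
    + c.1 * (a.2.1 * b.2.2 - a.2.2 * b.2.1)

/-- Determinant of the 2×2 matrix with columns `a`, `b`. -/
def det2 (a b : R2) : ℝ := a.1 * b.2 - a.2 * b.1

def e3 : R3 := ((0 : ℝ), (0 : ℝ), (1 : ℝ))

/-- First discrete partial derivative `q₁`. -/
def D1 (q : ℤ → ℤ → R3) (u v : ℤ) : R3 := q (u + 1) v - q u v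

/-- Second discrete partial derivative `q₂`. -/
def D2 (q : ℤ → ℤ → R3) (u v : ℤ) : R3 := q u (v + 1) - q u v

/-- Mixed discrete second derivative `q₁₂`. -/
def D12 (q : ℤ → ℤ → R3) (u v : ℤ) : R3 :=
  q (u + 1) (v + 1) - q (u + 1) v - q u (v + 1) + q u v

/-- Discrete second derivative `q₁₁`. -/
def D11 (q : ℤ → ℤ → R3) (u v : ℤ) : R3 := q (u + 1) v - (2 : ℝ) • q u v + q (u - 1) v

/-- Discrete second derivative `q₂₂`. -/
def D22 (q : ℤ → ℤ → R3) (u v : ℤ) : R3 := q u (v + 1) - (2 : ℝ) • q u v + q u (v - 1)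

/-- The discrete affine metric `Ω(u,v) = [q₁(u,v), q₂(u,v), ξ]`. -/
def Omega (q : ℤ → ℤ → R3) (ξ : R3) (u v : ℤ) : ℝ := det3 (D1 q u v) (D2 q u v) ξ

/-- Cubic form coefficient `A(u,v) = [q₁(u−1,v), q₁(u,v), ξ]`. -/
def Acoef (q : ℤ → ℤ → R3) (ξ : R3) (u v : ℤ) : ℝ := det3 (D1 q (u - 1) v) (D1 q u v) ξ

/-- Cubic form coefficient `B(u,v) = [q₂(u,v), q₂(u,v−1), ξ]`. -/
def Bcoef (q : ℤ → ℤ → R3) (ξ : R3) (u v : ℤ) : ℝ := det3 (D2 q u v) (D2 q u (v - 1)) ξ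

/-- `q` is a discrete improper indefinite affine sphere with affine normal `ξ`. -/
def IsDIIAS (q : ℤ → ℤ → R3) (ξ : R3) : Prop :=
  ∀ u v : ℤ,
    D12 q u v = Omega q ξ u v • ξ ∧
    0 < Omega q ξ u v ∧
    D1 q (u - 1) v ∈ Submodule.span ℝ {D1 q u v, D2 q u v} ∧
    D2 q u (v - 1) ∈ Submodule.span ℝ {D1 q u v, D2 q u v}

/-- `x(u,v) = ½(α(u)+β(v))`. -/
def xcc (α β : ℤ → R2) (u v : ℤ) : R2 := (1 / 2 : ℝ) • (α u + β v)

/-- `y(u,v) = ½(β(v)−α(u))`. -/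
def ycc (α β : ℤ → R2) (u v : ℤ) : R2 := (1 / 2 : ℝ) • (β v - α u)

/-- `z` satisfies the discrete centre-chord equations for the pair `(α,β)`. -/
def IsCentreChordZ (α β : ℤ → R2) (z : ℤ → ℤ → ℝ) : Prop :=
  ∀ u v : ℤ,
    z (u + 1) v - z u v = det2 (xcc α β (u + 1) v - xcc α β u v) (ycc α β u v) ∧
    z u (v + 1) - z u v = det2 (xcc α β u (v + 1) - xcc α β u v) (ycc α β u v)

/-- The centre-chord net `q(u,v) = (x(u,v), z(u,v))`. -/
def ccq (α β : ℤ → R2) (z : ℤ → ℤ → ℝ) (u v : ℤ) : R3 :=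
  ((xcc α β u v).1, (xcc α β u v).2, z u v)

/-- `Ω(u,v) = ¼ det(α₁(u), β₂(v))` of the centre-chord construction. -/
def OmegaCC (α β : ℤ → R2) (u v : ℤ) : ℝ :=
  (1 / 4 : ℝ) * det2 (α (u + 1) - α u) (β (v + 1) - β v)

/-- `α₁(u)` is discretely parallel to `β(v)`. -/
def dpAB (α β : ℤ → R2) (u v : ℤ) : Prop :=
  0 < det2 (α (u + 1) - α u) (β (v + 1) - β v) * det2 (α (u + 1) - α u) (β (v - 1) - β v)

/-- `β₂(v)` is discretely parallel to `α(u)`. -/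
def dpBA (α β : ℤ → R2) (u v : ℤ) : Prop :=
  0 < det2 (β (v + 1) - β v) (α (u + 1) - α u) * det2 (β (v + 1) - β v) (α (u - 1) - α u)

/-- Genericity assumption (G1). -/
def G1 (α β : ℤ → R2) : Prop :=
  ∀ u v : ℤ,
    LinearIndependent ℝ ![β (v - 1) - α u, β (v + 1) - α u] ∧
    ∃ s t : ℝ, 0 < s ∧ 0 < t ∧
      β v - α u = s • (β (v - 1) - α u) + t • (β (v + 1) - α u)

/-- Genericity assumption (G2). -/
def G2 (α β : ℤ → R2) : Prop :=
  ∀ u v : ℤ,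
    LinearIndependent ℝ ![α (u - 1) - β v, α (u + 1) - β v] ∧
    ∃ s t : ℝ, 0 < s ∧ 0 < t ∧
      α u - β v = s • (α (u - 1) - β v) + t • (α (u + 1) - β v)

/-- Genericity assumption (G3): no edge of `α` is parallel to an edge of `β`. -/
def G3 (α β : ℤ → R2) : Prop :=
  ∀ u v : ℤ, det2 (α (u + 1) - α u) (β (v + 1) - β v) ≠ 0

/-- Euclidean dot product on `ℝ³`. -/
def dot3 (a b : R3) : ℝ := a.1 * b.1 + a.2.1 * b.2.1 + a.2.2 * b.2.2

/-- Projection of `ℝ³` onto the first two coordinates. -/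
def projxy (p : R3) : R2 := (p.1, p.2.1)

/-- The ruling line `β(v) = (0, v)`. -/
def betaLine : ℤ → R2 := fun v => ((0 : ℝ), (v : ℝ))

/-- a ruled DIIAS without singularities is the graph of
`z = x¹x² + φ(x¹)`. -/
theorem stmt12 (α : ℤ → R2) (z : ℤ → ℤ → ℝ)
    (hmono : ∀ u : ℤ, (α u).1 < (α (u + 1)).1)
    (hz : IsCentreChordZ α betaLine z) :
    ∃ φ : ℝ → ℝ, ∀ u v : ℤ,
      z u v = (xcc α betaLine u v).1 * (xcc α betaLine u v).2 +
        φ ((xcc α betaLine u v).1) := by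
  set f : ℤ → ℝ := fun u => (xcc α betaLine u 0).1 with hf
  have hfu : ∀ u v : ℤ, (xcc α betaLine u v).1 = f u := by
    intro u v
    simp [hf, xcc, betaLine, Prod.smul_def, Prod.fst_add]
  have hfinj : Function.Injective f := by
    have : StrictMono f := by
      apply strictMono_int_of_lt_succ
      intro u
      have := hmono u
      simp only [hf, xcc, betaLine, Prod.smul_def, Prod.fst_add, smul_eq_mul]
      nlinarith
    exact this.injective
  set g : ℤ → ℝ := fun u =>
    z u 0 - (xcc α betaLine u 0).1 * (xcc α betaLine u 0).2 with hg
  refine ⟨Function.extend f g 0, ?_⟩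
  have key : ∀ u v : ℤ,
      z u v - (xcc α betaLine u v).1 * (xcc α betaLine u v).2 = g u := by
    intro u v
    have step : ∀ w : ℤ,
        z u (w + 1) - (xcc α betaLine u (w + 1)).1 * (xcc α betaLine u (w + 1)).2
          = z u w - (xcc α betaLine u w).1 * (xcc α betaLine u w).2 := by
      intro w
      have h2 := (hz u w).2
      simp only [xcc, ycc, betaLine, det2, Prod.smul_def, Prod.fst_add, Prod.snd_add,
        Prod.fst_sub, Prod.snd_sub, smul_eq_mul, Int.cast_add, Int.cast_one] at h2 ⊢
      nlinarith [h2]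
    induction v using Int.induction_on with
    | zero => rfl
    | succ w ih => rw [step w]; exact ih
    | pred w ih =>
        have := step (-w - 1)
        have e : (-w - 1 + 1 : ℤ) = -w := by ring
        rw [e] at this
        rw [← this]
        exact ih
  intro u v
  rw [hfu u v, Function.Injective.extend_apply hfinj, ← hfu u v, ← key u v]
  ring
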